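/- The double series Σ_{k≥1} Σ_{N≥k} N · S(N,k) (1−1/e)^{N−1}/(N−1)! · e^{−(k+1)} converges and equals c_3 · d_3, where c_3 = e^{−1} e^{−1/e} e^{(e^{1−1/e}−1)/e} and d_3 = 2 − 1/e + (1/e)(1 − 1/e) e^{1−1/e}. -/

import Mathlib

open scoped Nat

/-- Stirling numbers of the second kind. -/
def stirling : ℕ → ℕ → ℕ
  | 0, 0 => 1
  | 0, _ + 1 => 0
  | _ + 1, 0 => 0
  | n + 1, k + 1 => (k + 1) * stirling n (k + 1) + stirling n k

namespace Stmt17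

open Finset



lemma stirling_succ (n k : ℕ) :
    stirling (n+1) (k+1) = (k + 1) * stirling n (k + 1) + stirling n k := rfl

lemma stirling_eq_zero : ∀ (N k : ℕ), N < k → stirling N k = 0
  | 0, _+1, _ => rfl
  | n+1, k+1, h => by
      rw [stirling_succ, stirling_eq_zero n (k+1) (by omega), stirling_eq_zero n k (by omega)]
      simp

lemma S0 (y : ℝ) (k : ℕ) :
    ∑ j ∈ range (k+1), (-1:ℝ)^j * (k.choose j : ℝ) * y^j = (1-y)^k := by
  have h : (1 - y)^k = (-y + 1)^k := by ring
  rw [h, add_pow]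
  refine Finset.sum_congr rfl fun j hj => ?_
  rw [neg_pow]
  ring

/-- `F N k = ∑ j (-1)^j C(k,j) j^N`. -/
noncomputable def F (N k : ℕ) : ℝ := ∑ j ∈ range (k+1), (-1:ℝ)^j * (k.choose j : ℝ) * (j:ℝ)^N

noncomputable def G (N k : ℕ) : ℝ :=
  ∑ i ∈ range (k+1), (-1:ℝ)^i * (k.choose i : ℝ) * ((i:ℝ)+1)^N

lemma lemA (N k : ℕ) : F (N+1) (k+1) = -((k+1) * G N k) := by
  rw [F, Finset.sum_range_succ']
  have h0 : (-1:ℝ)^0 * ((k+1).choose 0 : ℝ) * ((0:ℕ):ℝ)^(N+1) = 0 := by simp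
  rw [h0, add_zero, G, Finset.mul_sum, ← Finset.sum_neg_distrib]
  refine Finset.sum_congr rfl fun i hi => ?_
  have hc : (k+1) * k.choose i = (k+1).choose (i+1) * (i+1) := Nat.add_one_mul_choose_eq k i
  have hc' : ((k+1):ℝ) * (k.choose i : ℝ) = ((k+1).choose (i+1) : ℝ) * ((i:ℝ)+1) := by
    exact_mod_cast congrArg (Nat.cast : ℕ → ℝ) hc
  push_cast
  linear_combination ((-1:ℝ)^i * ((i:ℝ)+1)^N) * hc'

lemma lemB (N k : ℕ) : F N (k+1) = F N k - G N k := by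
  rw [F, Finset.sum_range_succ']
  have hsplit : ∀ i ∈ range (k+1),
      (-1:ℝ)^(i+1) * ((k+1).choose (i+1) : ℝ) * ((i+1:ℕ):ℝ)^N
        = (-((-1:ℝ)^i * (k.choose i : ℝ) * ((i:ℝ)+1)^N))
          + (-1:ℝ)^(i+1) * (k.choose (i+1) : ℝ) * ((i+1:ℕ):ℝ)^N := by
    intro i hi
    have hc : (k+1).choose (i+1) = k.choose i + k.choose (i+1) := Nat.choose_succ_succ k i
    have hc' : (((k+1).choose (i+1)) : ℝ) = (k.choose i : ℝ) + (k.choose (i+1) : ℝ) := by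
      exact_mod_cast congrArg (Nat.cast : ℕ → ℝ) hc
    push_cast
    linear_combination (-(-1:ℝ)^i * ((i:ℝ)+1)^N) * hc'
  rw [Finset.sum_congr rfl hsplit, Finset.sum_add_distrib]
  have h1 : ∑ i ∈ range (k+1), (-((-1:ℝ)^i * (k.choose i : ℝ) * ((i:ℝ)+1)^N)) = -G N k := by
    rw [G, ← Finset.sum_neg_distrib]
  have h2 : (∑ i ∈ range (k+1), (-1:ℝ)^(i+1) * (k.choose (i+1) : ℝ) * ((i+1:ℕ):ℝ)^N)
      + (-1:ℝ)^0 * ((k).choose 0 : ℝ) * ((0:ℕ):ℝ)^N = F N k := by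
    rw [Finset.sum_range_succ]
    have hz : (k.choose (k+1) : ℝ) = 0 := by
      rw [Nat.choose_eq_zero_of_lt (by omega)]; simp
    rw [hz, F, Finset.sum_range_succ']
    simp
  rw [h1]
  have h0 : ((k+1).choose 0 : ℝ) = (k.choose 0 : ℝ) := by simp
  rw [h0]
  linear_combination h2

lemma stirling_formula (N : ℕ) : ∀ k : ℕ, ((k)! : ℝ) * (stirling N k : ℝ) = (-1:ℝ)^k * F N k := by
  induction N with
  | zero =>
    intro k
    cases k with
    | zero => simp [stirling, F]
    | succ k =>
      have hF : F 0 (k+1) = 0 := by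
        rw [F]
        have h : ∀ j ∈ range (k+2), (-1:ℝ)^j * ((k+1).choose j : ℝ) * (j:ℝ)^0
            = (-1:ℝ)^j * ((k+1).choose j : ℝ) * (1:ℝ)^j := by intro j hj; simp
        rw [Finset.sum_congr rfl h, S0]
        simp
      rw [hF, stirling_eq_zero 0 (k+1) (by omega)]
      simp
  | succ N ih =>
    intro k
    cases k with
    | zero =>
      have h : stirling (N+1) 0 = 0 := rfl
      rw [h, F]
      simp
    | succ k =>
      rw [stirling_succ, lemA N k]
      have h1 := ih (k+1)
      have h2 := ih k
      rw [lemB N k] at h1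
      push_cast [Nat.factorial_succ] at h1 h2 ⊢
      linear_combination ((k:ℝ)+1) * h1 + ((k:ℝ)+1) * h2



lemma tsum_exp (t : ℝ) : ∑' n : ℕ, t^n / (n)! = Real.exp t := by
  rw [Real.exp_eq_exp_ℝ, NormedSpace.exp_eq_tsum_div]

lemma shift_eq (t : ℝ) (m : ℕ) :
    ((m+1 : ℕ):ℝ) * t^(m+1) / ((m+1:ℕ))! = t * (t^m / (m)!) := by
  have hm : ((m)! : ℝ) ≠ 0 := Nat.cast_ne_zero.mpr m.factorial_ne_zero
  rw [Nat.factorial_succ]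
  push_cast
  field_simp
  ring

lemma summable_mul_pow (t : ℝ) : Summable (fun m : ℕ => (m:ℝ) * t^m / (m)!) := by
  rw [← summable_nat_add_iff 1]
  refine ((Real.summable_pow_div_factorial t).mul_left t).congr fun m => ?_
  exact (shift_eq t m).symm

lemma tsum_mul_pow (t : ℝ) : ∑' m : ℕ, (m:ℝ) * t^m / (m)! = t * Real.exp t := by
  rw [Summable.tsum_eq_zero_add (summable_mul_pow t)]
  simp only [Nat.cast_zero, zero_mul, zero_div, zero_add]
  have h : ∀ m : ℕ, ((m+1 : ℕ):ℝ) * t^(m+1) / ((m+1:ℕ))! = t * (t^m / (m)!) := shift_eq t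
  rw [tsum_congr (fun m => by exact_mod_cast h m), tsum_mul_left, tsum_exp]

/-- the inner series term for a single `j`. -/
noncomputable def hfun (t : ℝ) (j : ℕ) (N : ℕ) : ℝ := (N:ℝ) * (j:ℝ)^N * t^(N-1) / ((N-1)! : ℝ)

lemma hfun_succ (t : ℝ) (j m : ℕ) :
    hfun t j (m+1) = (j:ℝ) * ((j*t)^m / (m)!) + (j:ℝ) * ((m:ℝ) * (j*t)^m / (m)!) := by
  have hm : ((m)! : ℝ) ≠ 0 := Nat.cast_ne_zero.mpr m.factorial_ne_zero
  simp only [hfun, Nat.add_sub_cancel]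
  push_cast
  field_simp
  ring

lemma hfun_summable (t : ℝ) (j : ℕ) : Summable (hfun t j) := by
  rw [← summable_nat_add_iff 1]
  refine (((Real.summable_pow_div_factorial ((j:ℝ)*t)).mul_left (j:ℝ)).add
    ((summable_mul_pow ((j:ℝ)*t)).mul_left (j:ℝ))).congr fun m => ?_
  rw [hfun_succ]

lemma hfun_tsum (t : ℝ) (j : ℕ) :
    ∑' N, hfun t j N = (j:ℝ) * (1 + (j:ℝ)*t) * Real.exp ((j:ℝ)*t) := by
  rw [Summable.tsum_eq_zero_add (hfun_summable t j)]
  have h0 : hfun t j 0 = 0 := by simp [hfun]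
  rw [h0, zero_add, tsum_congr (hfun_succ t j),
    Summable.tsum_add ((Real.summable_pow_div_factorial ((j:ℝ)*t)).mul_left (j:ℝ))
      ((summable_mul_pow ((j:ℝ)*t)).mul_left (j:ℝ)),
    tsum_mul_left, tsum_mul_left, tsum_exp, tsum_mul_pow]
  ring

noncomputable def f0 (t : ℝ) (k N : ℕ) : ℝ :=
  (N:ℝ) * (stirling N k : ℝ) * t^(N-1) / ((N-1)! : ℝ)

lemma f0_eq (t : ℝ) (k N : ℕ) :
    f0 t k N = ∑ j ∈ range (k+1),
      ((-1:ℝ)^k / (k)! * ((-1:ℝ)^j * (k.choose j : ℝ))) * hfun t j N := by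
  have hk : (((k))! : ℝ) ≠ 0 := Nat.cast_ne_zero.mpr k.factorial_ne_zero
  have h := stirling_formula N k
  simp only [F] at h
  have hs : (stirling N k : ℝ)
      = (-1:ℝ)^k / (k)! * ∑ j ∈ range (k+1), (-1:ℝ)^j * (k.choose j : ℝ) * (j:ℝ)^N := by
    field_simp
    linarith [h]
  rw [f0, hs]
  simp only [Finset.mul_sum, Finset.sum_mul, Finset.sum_div]
  refine Finset.sum_congr rfl fun j hj => ?_
  simp only [hfun]
  ring

lemma f0_summable (t : ℝ) (k : ℕ) : Summable (f0 t k) := by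
  refine (summable_sum (s := range (k+1))
    (f := fun j N => ((-1:ℝ)^k / (k)! * ((-1:ℝ)^j * (k.choose j : ℝ))) * hfun t j N)
    (fun j _ => (hfun_summable t j).mul_left _)).congr fun N => ?_
  exact (f0_eq t k N).symm

lemma f0_tsum (t : ℝ) (k : ℕ) :
    ∑' N, f0 t k N = (-1:ℝ)^k / (k)! *
      ∑ j ∈ range (k+1), (-1:ℝ)^j * (k.choose j : ℝ) *
        ((j:ℝ) * (1 + (j:ℝ)*t) * Real.exp ((j:ℝ)*t)) := by
  rw [tsum_congr (f0_eq t k)]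
  rw [Summable.tsum_finsetSum (fun j _ => (hfun_summable t j).mul_left _)]
  rw [Finset.mul_sum]
  refine Finset.sum_congr rfl fun j hj => ?_
  rw [tsum_mul_left, hfun_tsum]
  ring

/-- alternating binomial moment sums -/
noncomputable def Q (y : ℝ) (k : ℕ) : ℝ :=
  ∑ j ∈ range (k+1), (-1:ℝ)^j * (k.choose j : ℝ) * (j:ℝ) * y^j

noncomputable def R (y : ℝ) (k : ℕ) : ℝ :=
  ∑ j ∈ range (k+1), (-1:ℝ)^j * (k.choose j : ℝ) * (j:ℝ)^2 * y^j

lemma Q_zero (y : ℝ) : Q y 0 = 0 := by simp [Q]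
lemma R_zero (y : ℝ) : R y 0 = 0 := by simp [R]

lemma Q_succ (y : ℝ) (k : ℕ) : Q y (k+1) = -(((k:ℝ)+1) * y * (1-y)^k) := by
  rw [Q, Finset.sum_range_succ']
  have h0 : (-1:ℝ)^0 * ((k+1).choose 0 : ℝ) * ((0:ℕ):ℝ) * y^0 = 0 := by simp
  rw [h0, add_zero, ← S0 y k, Finset.mul_sum, ← Finset.sum_neg_distrib]
  refine Finset.sum_congr rfl fun i hi => ?_
  have hc : (k+1) * k.choose i = (k+1).choose (i+1) * (i+1) := Nat.add_one_mul_choose_eq k i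
  have hc' : ((k:ℝ)+1) * (k.choose i : ℝ) = ((k+1).choose (i+1) : ℝ) * ((i:ℝ)+1) := by
    exact_mod_cast congrArg (Nat.cast : ℕ → ℝ) hc
  push_cast
  linear_combination ((-1:ℝ)^i * y^(i+1)) * hc'

lemma R_succ (y : ℝ) (k : ℕ) : R y (k+1) = -(((k:ℝ)+1) * y * (Q y k + (1-y)^k)) := by
  rw [R, Finset.sum_range_succ']
  have h0 : (-1:ℝ)^0 * ((k+1).choose 0 : ℝ) * ((0:ℕ):ℝ)^2 * y^0 = 0 := by simp
  rw [h0, add_zero, ← S0 y k, Q]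
  rw [mul_add, Finset.mul_sum, Finset.mul_sum, ← Finset.sum_add_distrib, ← Finset.sum_neg_distrib]
  refine Finset.sum_congr rfl fun i hi => ?_
  have hc : (k+1) * k.choose i = (k+1).choose (i+1) * (i+1) := Nat.add_one_mul_choose_eq k i
  have hc' : ((k:ℝ)+1) * (k.choose i : ℝ) = ((k+1).choose (i+1) : ℝ) * ((i:ℝ)+1) := by
    exact_mod_cast congrArg (Nat.cast : ℕ → ℝ) hc
  push_cast
  linear_combination ((-1:ℝ)^i * ((i:ℝ)+1) * y^(i+1)) * hc'

lemma f0_tsum_QR (t : ℝ) (k : ℕ) :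
    ∑' N, f0 t k N = (-1:ℝ)^k / (k)! * (Q (Real.exp t) k + t * R (Real.exp t) k) := by
  rw [f0_tsum]
  congr 1
  rw [Q, R, Finset.mul_sum, ← Finset.sum_add_distrib]
  refine Finset.sum_congr rfl fun j hj => ?_
  rw [Real.exp_nat_mul]
  ring



noncomputable def xc : ℝ := 1 - 1 / Real.exp 1
noncomputable def yc : ℝ := Real.exp xc
noncomputable def β : ℝ := Real.exp (-1)
noncomputable def u : ℝ := (yc - 1) * β

lemma hU (m : ℕ) : u^m = (-1:ℝ)^m * (1-yc)^m * β^m := by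
  rw [← mul_pow, ← mul_pow]
  congr 1
  rw [u]
  ring

noncomputable def g (k : ℕ) : ℝ := β^(k+1) * ((-1:ℝ)^k / (k)! * (Q yc k + xc * R yc k))
noncomputable def g1 (m : ℕ) : ℝ := (yc*(1+xc)*β^2) * (u^m / (m)!)
noncomputable def g2 (r : ℕ) : ℝ := (xc*yc^2*β^3) * (u^r / (r)!)
noncomputable def g2' (m : ℕ) : ℝ := β^(m+2) * (xc * yc * ((-1:ℝ)^m * Q yc m) / (m)!)

lemma g_zero : g 0 = 0 := by simp [g, Q_zero, R_zero]
lemma g2'_zero : g2' 0 = 0 := by simp [g2', Q_zero]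

lemma g_succ (m : ℕ) : g (m+1) = g1 m + g2' m := by
  have hm : ((m)! : ℝ) ≠ 0 := Nat.cast_ne_zero.mpr m.factorial_ne_zero
  simp only [g, g1, g2', Q_succ, R_succ]
  have h := hU m
  push_cast [Nat.factorial_succ]
  field_simp
  linear_combination (-(yc*(1+xc)*β^2)) * h

lemma g2'_succ (r : ℕ) : g2' (r+1) = g2 r := by
  have hr : ((r)! : ℝ) ≠ 0 := Nat.cast_ne_zero.mpr r.factorial_ne_zero
  simp only [g2', g2, Q_succ]
  have h := hU r
  push_cast [Nat.factorial_succ]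
  field_simp
  linear_combination (-(xc*yc^2*β^3)) * h

lemma g1_summable : Summable g1 :=
  (Real.summable_pow_div_factorial u).mul_left _

lemma g2_summable : Summable g2 :=
  (Real.summable_pow_div_factorial u).mul_left _

lemma tsum_exp' (t : ℝ) : ∑' n : ℕ, (t^n / (n)!) = Real.exp t := tsum_exp t

lemma g1_tsum : ∑' m, g1 m = (yc*(1+xc)*β^2) * Real.exp u := by
  simp only [g1]
  rw [tsum_mul_left, tsum_exp']

lemma g2_tsum : ∑' r, g2 r = (xc*yc^2*β^3) * Real.exp u := by
  simp only [g2]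
  rw [tsum_mul_left, tsum_exp']

lemma g2'_summable : Summable g2' := by
  rw [← summable_nat_add_iff 1]
  exact g2_summable.congr fun r => (g2'_succ r).symm

lemma g2'_tsum : ∑' m, g2' m = (xc*yc^2*β^3) * Real.exp u := by
  rw [Summable.tsum_eq_zero_add g2'_summable, g2'_zero, zero_add,
    tsum_congr g2'_succ, g2_tsum]

lemma g_summable : Summable g := by
  rw [← summable_nat_add_iff 1]
  exact (g1_summable.add g2'_summable).congr fun m => (g_succ m).symm

lemma g_tsum : ∑' k, g k = (yc*(1+xc)*β^2) * Real.exp u + (xc*yc^2*β^3) * Real.exp u := by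
  rw [Summable.tsum_eq_zero_add g_summable, g_zero, zero_add, tsum_congr g_succ,
    Summable.tsum_add g1_summable g2'_summable, g1_tsum, g2'_tsum]

lemma exp_neg_nat (k : ℕ) : Real.exp (-((k:ℝ)+1)) = β^(k+1) := by
  rw [β, ← Real.exp_nat_mul]
  congr 1
  push_cast
  ring

lemma xc_nonneg : 0 ≤ xc := by
  have h1 : (1:ℝ) ≤ Real.exp 1 := by linarith [Real.add_one_le_exp 1]
  have : 1 / Real.exp 1 ≤ 1 := by
    rw [div_le_one (by positivity)]
    exact h1
  simp only [xc]
  linarith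

lemma f0_nonneg (k N : ℕ) : 0 ≤ f0 xc k N := by
  apply div_nonneg _ (by positivity)
  have := xc_nonneg
  positivity

/-- The function in the theorem statement equals the clean version. -/
lemma F_eq (p : ℕ × ℕ) :
    (if 1 ≤ p.1 ∧ p.1 ≤ p.2 then
        (p.2 : ℝ) * (stirling p.2 p.1 : ℝ) *
          (1 - 1 / Real.exp 1) ^ (p.2 - 1) / ((p.2 - 1)! : ℝ) *
          Real.exp (-((p.1 : ℝ) + 1))
      else 0) = β^(p.1+1) * f0 xc p.1 p.2 := by
  obtain ⟨k, N⟩ := p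
  simp only
  by_cases h : 1 ≤ k ∧ k ≤ N
  · rw [if_pos h, exp_neg_nat]
    simp only [f0, xc]
    ring
  · rw [if_neg h]
    have hz : f0 xc k N = 0 := by
      rcases Nat.eq_zero_or_pos k with hk | hk
      · subst hk
        cases N with
        | zero => simp [f0]
        | succ n =>
          have : stirling (n+1) 0 = 0 := rfl
          simp [f0, this]
      · have hNk : N < k := by omega
        simp [f0, stirling_eq_zero N k hNk]
    rw [hz, mul_zero]

lemma T_nonneg (p : ℕ × ℕ) : 0 ≤ β^(p.1+1) * f0 xc p.1 p.2 := by
  have h1 := f0_nonneg p.1 p.2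
  have h2 : (0:ℝ) < β := Real.exp_pos _
  positivity

lemma T_summable_fiber (k : ℕ) : Summable (fun N => β^(k+1) * f0 xc k N) :=
  (f0_summable xc k).mul_left _

lemma T_tsum_fiber (k : ℕ) : ∑' N, β^(k+1) * f0 xc k N = g k := by
  rw [tsum_mul_left, f0_tsum_QR]
  simp only [g, yc]


lemma yc_eq : Real.exp (1 - 1 / Real.exp 1) = yc := by rw [yc, xc]

lemma hb : β = (Real.exp 1)⁻¹ := by rw [β, Real.exp_neg]

lemma hy : yc = Real.exp 1 * Real.exp (-(1 / Real.exp 1)) := by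
  have h : (1:ℝ) - 1/Real.exp 1 = 1 + -(1/Real.exp 1) := by ring
  rw [yc, xc, h, Real.exp_add]


end Stmt17

open Stmt17

/-- The double series `∑_{k≥1} ∑_{N≥k} N·S(N,k)(1−1/e)^{N−1}/(N−1)!·e^{−(k+1)}`
converges, with sum `c₃·d₃`. Here `p = (k, N)`. -/
theorem stmt_17 :
    Summable (fun p : ℕ × ℕ =>
      if 1 ≤ p.1 ∧ p.1 ≤ p.2 then
        (p.2 : ℝ) * (stirling p.2 p.1 : ℝ) *
          (1 - 1 / Real.exp 1) ^ (p.2 - 1) / ((p.2 - 1)! : ℝ) *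
          Real.exp (-((p.1 : ℝ) + 1))
      else 0) ∧
    ∑' p : ℕ × ℕ,
        (if 1 ≤ p.1 ∧ p.1 ≤ p.2 then
          (p.2 : ℝ) * (stirling p.2 p.1 : ℝ) *
            (1 - 1 / Real.exp 1) ^ (p.2 - 1) / ((p.2 - 1)! : ℝ) *
            Real.exp (-((p.1 : ℝ) + 1))
        else 0) =
      (Real.exp (-1) * Real.exp (-(1 / Real.exp 1)) *
          Real.exp ((Real.exp (1 - 1 / Real.exp 1) - 1) / Real.exp 1)) *
        (2 - 1 / Real.exp 1 +
          (1 / Real.exp 1) * (1 - 1 / Real.exp 1) * Real.exp (1 - 1 / Real.exp 1)) := by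
  have hsumm : Summable (fun p : ℕ × ℕ => β^(p.1+1) * f0 xc p.1 p.2) := by
    rw [summable_prod_of_nonneg T_nonneg]
    refine ⟨fun k => T_summable_fiber k, ?_⟩
    simpa only [T_tsum_fiber] using g_summable
  constructor
  · exact (summable_congr F_eq).mpr hsumm
  · rw [tsum_congr F_eq, Summable.tsum_prod' hsumm (fun k => T_summable_fiber k)]
    rw [tsum_congr (fun k => T_tsum_fiber k), g_tsum]
    have ha : Real.exp 1 ≠ 0 := (Real.exp_pos 1).ne'
    have hexpu : Real.exp u = Real.exp ((yc - 1) / Real.exp 1) := by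
      rw [u, hb, div_eq_mul_inv]
    rw [yc_eq, hexpu, hb, Real.exp_neg 1]
    generalize Real.exp ((yc - 1) / Real.exp 1) = c
    rw [hy, xc]
    generalize Real.exp (-(1 / Real.exp 1)) = b
    rw [show Real.exp 1 = (Real.exp 1 : ℝ) from rfl]
    generalize hA : Real.exp 1 = a at ha ⊢
    field_simp
    ring
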